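/- A separable Banach space X has the Point of Continuity Property if and only if Φ(X) is well-defined and Φ(X) < ω₁, where ω₁ is the first uncountable ordinal. -/

import Mathlib

open Metric Set Pointwise

noncomputable section

/-- The weak topology on a normed space `X`: the initial topology with respect to all
continuous linear functionals. -/
noncomputable def weakTop (X : Type*) [NormedAddCommGroup X] [NormedSpace ℝ X] :
    TopologicalSpace X :=
  ⨅ f : X →L[ℝ] ℝ, TopologicalSpace.induced (⇑f) inferInstance

/-- A set is weakly open if it is open for the weak topology. -/
def IsWeaklyOpen {X : Type*} [NormedAddCommGroup X] [NormedSpace ℝ X] (V : Set X) : Prop :=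
  @IsOpen X (weakTop X) V

/-- The derived set `σ_ε(K)`: remove from `K` the union of all weakly open sets `V` whose
trace on `K` has (norm) diameter `< ε`. -/
noncomputable def dSet {X : Type*} [NormedAddCommGroup X] [NormedSpace ℝ X] (ε : ℝ)
    (K : Set X) : Set X :=
  K \ ⋃₀ {V : Set X | IsWeaklyOpen V ∧ Metric.diam (V ∩ K) < ε}

/-- The transfinite iterates `σ_ε^α(K)`: `σ_ε^0(K) = K`, `σ_ε^{α+1}(K) = σ_ε(σ_ε^α(K))`,
and `σ_ε^α(K) = ⋂_{β<α} σ_ε^β(K)` for `α` a limit ordinal. -/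
noncomputable def dIter {X : Type*} [NormedAddCommGroup X] [NormedSpace ℝ X] (ε : ℝ)
    (K : Set X) (α : Ordinal.{0}) : Set X :=
  Ordinal.limitRecOn α K (fun _ ih => dSet ε ih)
    (fun o _ ih => ⋂ (β : Ordinal.{0}) (h : β < o), ih β h)

/-- `Φ(X, ε)`: the least ordinal `α` with `σ_ε^α(B_X) = ∅` (junk value `0` if there is none). -/
noncomputable def PhiEps (X : Type*) [NormedAddCommGroup X] [NormedSpace ℝ X] (ε : ℝ) :
    Ordinal.{0} :=
  sInf {γ : Ordinal.{0} | dIter ε (Metric.closedBall (0 : X) 1) γ = ∅}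

/-- `Φ(X, ε)` is well defined, i.e. some derived iterate of the unit ball is empty. -/
def PhiDefinedAt (X : Type*) [NormedAddCommGroup X] [NormedSpace ℝ X] (ε : ℝ) : Prop :=
  ∃ γ : Ordinal.{0}, dIter ε (Metric.closedBall (0 : X) 1) γ = ∅

/-- `Φ(X) < ∞`, i.e. `Φ(X, ε)` is well defined for every `ε > 0`. -/
def PhiDefined (X : Type*) [NormedAddCommGroup X] [NormedSpace ℝ X] : Prop :=
  ∀ ε : ℝ, 0 < ε → PhiDefinedAt X ε

/-- The weak-fragmentability index `Φ(X) = sup_{ε > 0} Φ(X, ε)`. -/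
noncomputable def Phi (X : Type*) [NormedAddCommGroup X] [NormedSpace ℝ X] : Ordinal.{0} :=
  ⨆ ε : {ε : ℝ // 0 < ε}, PhiEps X ε.1

/-- `X` has the Point of Continuity Property: every nonempty bounded norm-closed subset `F`
of `X` has a point at which the identity `(F, weak) → (F, norm)` is continuous. -/
def HasPCP (X : Type*) [NormedAddCommGroup X] [NormedSpace ℝ X] : Prop :=
  ∀ F : Set X, F.Nonempty → Bornology.IsBounded F → IsClosed F →
    ∃ x ∈ F, ∀ ε : ℝ, 0 < ε →
      ∃ V : Set X, IsWeaklyOpen V ∧ x ∈ V ∧ V ∩ F ⊆ Metric.ball x ε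

section Aux

open Bornology Topology

variable {X : Type*} [NormedAddCommGroup X] [NormedSpace ℝ X]

lemma weakTop_eq : weakTop X = (inferInstance : TopologicalSpace (WeakSpace ℝ X)) := by
  show _ = TopologicalSpace.induced (fun x y => (topDualPairing ℝ X).flip x y) Pi.topologicalSpace
  rw [Pi.topologicalSpace, induced_iInf]
  simp only [induced_compose]
  rfl

lemma normTop_le_weakTop : (inferInstance : TopologicalSpace X) ≤ weakTop X :=
  le_iInf fun f => continuous_iff_le_induced.1 f.continuous

lemma IsWeaklyOpen.isOpen {V : Set X} (h : IsWeaklyOpen V) : IsOpen V :=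
  h.mono normTop_le_weakTop

lemma isWeaklyOpen_univ : IsWeaklyOpen (univ : Set X) := @isOpen_univ X (weakTop X)

lemma isWeaklyOpen_iff {V : Set X} :
    IsWeaklyOpen V ↔ @IsOpen (WeakSpace ℝ X) _ V := by
  rw [IsWeaklyOpen, weakTop_eq]
  exact Iff.rfl

lemma IsWeaklyOpen.inter {V W : Set X} (hV : IsWeaklyOpen V) (hW : IsWeaklyOpen W) :
    IsWeaklyOpen (V ∩ W) :=
  isWeaklyOpen_iff.2 ((isWeaklyOpen_iff.1 hV).inter (isWeaklyOpen_iff.1 hW))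

lemma weakTop_regular : @RegularSpace X (weakTop X) := by
  rw [weakTop_eq]
  exact inferInstanceAs (RegularSpace (WeakSpace ℝ X))

lemma exists_weak_shrink' {U : Set (WeakSpace ℝ X)} {x : WeakSpace ℝ X}
    (hU : IsOpen U) (hx : x ∈ U) :
    ∃ W : Set (WeakSpace ℝ X), IsOpen W ∧ x ∈ W ∧ ∃ C, IsClosed C ∧ W ⊆ C ∧ C ⊆ U := by
  obtain ⟨C, hC, hCc, hCU⟩ := exists_mem_nhds_isClosed_subset (hU.mem_nhds hx)
  exact ⟨interior C, isOpen_interior, mem_interior_iff_mem_nhds.2 hC, C, hCc,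
    interior_subset, hCU⟩

/-- Regularity of the weak topology: inside any weakly open set around `x` one can find a
weakly open neighborhood whose (norm) closure is still inside. -/
lemma exists_weak_shrink {U : Set X} {x : X} (hU : IsWeaklyOpen U) (hx : x ∈ U) :
    ∃ W : Set X, IsWeaklyOpen W ∧ x ∈ W ∧ closure W ⊆ U := by
  obtain ⟨W, hWo, hxW, C, hCc, hWC, hCU⟩ :=
    exists_weak_shrink' (X := X) ((isWeaklyOpen_iff (X := X) (V := U)).1 hU) hx
  refine ⟨W, isWeaklyOpen_iff.2 hWo, hxW, ?_⟩
  have h1 : @closure X (weakTop X) W ⊆ U := by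
    rw [weakTop_eq]
    exact (closure_minimal hWC hCc).trans hCU
  exact (closure.mono normTop_le_weakTop).trans h1

lemma weakContinuous_functional (f : X →L[ℝ] ℝ) : @Continuous X ℝ (weakTop X) _ f :=
  continuous_iInf_dom (i := f) continuous_induced_dom

lemma weakContinuous_smul (c : ℝ) :
    @Continuous X X (weakTop X) (weakTop X) (fun x => c • x) := by
  show @Continuous X X (weakTop X) (⨅ f : X →L[ℝ] ℝ, TopologicalSpace.induced (⇑f) inferInstance) _
  rw [continuous_iInf_rng]
  intro f
  rw [continuous_induced_rng]
  have : (⇑f ∘ fun x : X => c • x) = ⇑(c • f) := by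
    ext x
    simp [map_smul]
  rw [this]
  exact weakContinuous_functional (c • f)

lemma IsWeaklyOpen.preimage_smul {V : Set X} (h : IsWeaklyOpen V) (c : ℝ) :
    IsWeaklyOpen ((fun x : X => c • x) ⁻¹' V) :=
  @Continuous.isOpen_preimage X X (weakTop X) (weakTop X) _ (weakContinuous_smul c) V h

lemma dSet_subset (ε : ℝ) (K : Set X) : dSet ε K ⊆ K := diff_subset

lemma dIter_zero (ε : ℝ) (K : Set X) : dIter ε K 0 = K :=
  Ordinal.limitRecOn_zero _ _ _

lemma dIter_succ (ε : ℝ) (K : Set X) (α : Ordinal) :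
    dIter ε K (Order.succ α) = dSet ε (dIter ε K α) :=
  Ordinal.limitRecOn_succ _ _ _ _

lemma dIter_limit (ε : ℝ) (K : Set X) {α : Ordinal} (h : Order.IsSuccLimit α) :
    dIter ε K α = ⋂ (β : Ordinal) (_ : β < α), dIter ε K β :=
  Ordinal.limitRecOn_limit _ _ _ _ h

lemma dIter_anti (ε : ℝ) (K : Set X) :
    ∀ β α : Ordinal, α ≤ β → dIter ε K β ⊆ dIter ε K α := by
  intro β
  induction β using Ordinal.limitRecOn with
  | zero =>
    intro α h
    rw [nonpos_iff_eq_zero.1 h]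
  | add_one β ih =>
    rw [Ordinal.add_one_eq_succ]
    intro α h
    rcases Order.le_succ_iff_eq_or_le.1 h with rfl | h'
    · exact subset_rfl
    · rw [dIter_succ]
      exact (dSet_subset _ _).trans (ih α h')
  | limit β hβ ih =>
    intro α h
    rcases eq_or_lt_of_le h with rfl | h'
    · exact subset_rfl
    · rw [dIter_limit _ _ hβ]
      exact iInter₂_subset α h'

lemma dIter_subset (ε : ℝ) (K : Set X) (α : Ordinal) : dIter ε K α ⊆ K := by
  have := dIter_anti ε K α 0 (zero_le (a := α))
  rwa [dIter_zero] at this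

lemma isClosed_dSet {ε : ℝ} {K : Set X} (h : IsClosed K) : IsClosed (dSet ε K) := by
  have hU : IsWeaklyOpen (⋃₀ {V : Set X | IsWeaklyOpen V ∧ Metric.diam (V ∩ K) < ε}) :=
    @isOpen_sUnion X (weakTop X) _ (fun V hV => hV.1)
  rw [dSet, diff_eq]
  exact h.inter (isOpen_compl_iff.1 (by simpa using hU.isOpen))

lemma isClosed_dIter {ε : ℝ} {K : Set X} (h : IsClosed K) (α : Ordinal) :
    IsClosed (dIter ε K α) := by
  induction α using Ordinal.limitRecOn with
  | zero => rwa [dIter_zero]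
  | add_one α ih => rw [Ordinal.add_one_eq_succ, dIter_succ]; exact isClosed_dSet ih
  | limit α hα ih =>
    rw [dIter_limit _ _ hα]
    exact isClosed_iInter fun β => isClosed_iInter fun hβ => ih β hβ

lemma dSet_mono {ε ε' : ℝ} (hε : ε ≤ ε') {S K : Set X} (hSK : S ⊆ K) (hK : IsBounded K) :
    dSet ε' S ⊆ dSet ε K := by
  rintro x ⟨hxS, hx⟩
  refine ⟨hSK hxS, fun hmem => hx ?_⟩
  obtain ⟨V, ⟨hVopen, hVd⟩, hxV⟩ := hmem
  refine ⟨V, ⟨hVopen, ?_⟩, hxV⟩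
  calc Metric.diam (V ∩ S) ≤ Metric.diam (V ∩ K) :=
        diam_mono (inter_subset_inter_right V hSK) (hK.subset inter_subset_right)
    _ < ε := hVd
    _ ≤ ε' := hε

lemma dIter_mono {ε ε' : ℝ} (hε : ε ≤ ε') {S K : Set X} (hSK : S ⊆ K) (hK : IsBounded K)
    (α : Ordinal) : dIter ε' S α ⊆ dIter ε K α := by
  induction α using Ordinal.limitRecOn with
  | zero => rw [dIter_zero, dIter_zero]; exact hSK
  | add_one α ih =>
    rw [Ordinal.add_one_eq_succ, dIter_succ, dIter_succ]
    exact dSet_mono hε ih (hK.subset (dIter_subset _ _ _))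
  | limit α hα ih =>
    rw [dIter_limit _ _ hα, dIter_limit _ _ hα]
    exact iInter₂_mono fun β hβ => ih β hβ

/-- From emptiness of some iterate of the unit ball, every nonempty subset of the unit ball
has a nonempty weakly open slice of diameter `< ε`. -/
lemma frag_of_empty {ε : ℝ} {γ : Ordinal} (hB : dIter ε (closedBall (0 : X) 1) γ = ∅)
    {S : Set X} (hS : S ⊆ closedBall (0 : X) 1) (hne : S.Nonempty) :
    ∃ V : Set X, IsWeaklyOpen V ∧ (V ∩ S).Nonempty ∧ Metric.diam (V ∩ S) < ε := by
  have hSempty : dIter ε S γ = ∅ :=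
    eq_empty_of_subset_empty (hB ▸ dIter_mono le_rfl hS isBounded_closedBall γ)
  have hfix : dSet ε S ≠ S := by
    intro hfix
    have hall : ∀ α : Ordinal, dIter ε S α = S := by
      intro α
      induction α using Ordinal.limitRecOn with
      | zero => exact dIter_zero _ _
      | add_one α ih => rw [Ordinal.add_one_eq_succ, dIter_succ, ih, hfix]
      | limit α hα ih =>
        rw [dIter_limit _ _ hα]
        refine subset_antisymm ?_ (subset_iInter₂ fun β hβ => (ih β hβ).symm.subset)
        intro x hx
        have hx0 := mem_iInter₂.1 hx 0 hα.pos
        rwa [ih 0 hα.pos] at hx0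
    rw [hall γ] at hSempty
    exact hne.ne_empty hSempty
  obtain ⟨x, hxS, hxd⟩ := exists_of_ssubset ⟨dSet_subset ε S, fun h => hfix (subset_antisymm (dSet_subset ε S) h)⟩
  have hxU : x ∈ ⋃₀ {V : Set X | IsWeaklyOpen V ∧ Metric.diam (V ∩ S) < ε} := by
    by_contra hxU
    exact hxd ⟨hxS, hxU⟩
  obtain ⟨V, ⟨hVopen, hVd⟩, hxV⟩ := hxU
  exact ⟨V, hVopen, ⟨x, hxV, hxS⟩, hVd⟩

/-- The core construction: fragmentability of subsets of the unit ball plus completeness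
yields a point of weak-to-norm continuity for any closed subset of the unit ball. -/
lemma pcp_aux [CompleteSpace X]
    (hfrag : ∀ S : Set X, S ⊆ closedBall (0 : X) 1 → S.Nonempty → ∀ δ : ℝ, 0 < δ →
      ∃ V : Set X, IsWeaklyOpen V ∧ (V ∩ S).Nonempty ∧ Metric.diam (V ∩ S) < δ)
    (F : Set X) (hF1 : F ⊆ closedBall (0 : X) 1) (hFne : F.Nonempty) (hFcl : IsClosed F) :
    ∃ x ∈ F, ∀ ε : ℝ, 0 < ε → ∃ V : Set X, IsWeaklyOpen V ∧ x ∈ V ∧ V ∩ F ⊆ ball x ε := by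
  have key : ∀ (n : ℕ) (U : Set X), IsWeaklyOpen U → (U ∩ F).Nonempty →
      ∃ U' : Set X, (IsWeaklyOpen U' ∧ (U' ∩ F).Nonempty) ∧ closure U' ⊆ U ∧
        Metric.diam (U' ∩ F) < 1 / (n + 1) := by
    intro n U hU hUF
    obtain ⟨V, hVopen, hVne, hVd⟩ :=
      hfrag (U ∩ F) (inter_subset_right.trans hF1) hUF (1 / (n + 1)) (by positivity)
    obtain ⟨x0, hx0⟩ := hVne
    obtain ⟨W, hWopen, hx0W, hWcl⟩ := exists_weak_shrink (hVopen.inter hU) ⟨hx0.1, hx0.2.1⟩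
    refine ⟨W, ⟨hWopen, ⟨x0, hx0W, hx0.2.2⟩⟩, hWcl.trans inter_subset_right, ?_⟩
    calc Metric.diam (W ∩ F) ≤ Metric.diam (V ∩ (U ∩ F)) := by
          refine diam_mono ?_ (isBounded_closedBall.subset
            ((inter_subset_right.trans inter_subset_right).trans hF1))
          intro y hy
          have hyVU : y ∈ V ∩ U := hWcl (subset_closure hy.1)
          exact ⟨hyVU.1, hyVU.2, hy.2⟩
      _ < 1 / (n + 1) := hVd
  choose! step hstep using key
  set U : ℕ → Set X := fun n => Nat.rec univ (fun n Un => step n Un) n with hUdef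
  have inv : ∀ n, IsWeaklyOpen (U n) ∧ (U n ∩ F).Nonempty := by
    intro n
    induction n with
    | zero =>
      obtain ⟨z, hz⟩ := hFne
      exact ⟨isWeaklyOpen_univ, z, trivial, hz⟩
    | succ n ih => exact (hstep n (U n) ih.1 ih.2).1
  have hcl : ∀ n, closure (U (n + 1)) ⊆ U n := fun n => (hstep n (U n) (inv n).1 (inv n).2).2.1
  have hdiam : ∀ n, Metric.diam (U (n + 1) ∩ F) < 1 / (n + 1) :=
    fun n => (hstep n (U n) (inv n).1 (inv n).2).2.2
  have hchain : ∀ n, U (n + 1) ⊆ U n := fun n => subset_closure.trans (hcl n)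
  have hmono : ∀ {m n : ℕ}, n ≤ m → U m ⊆ U n := by
    intro m n h
    exact antitone_nat_of_succ_le (f := U) (fun k => hchain k) h
  choose y hy using fun n => (inv n).2
  have hyIn : ∀ {m n : ℕ}, n ≤ m → y m ∈ U n ∩ F := fun {m n} h => ⟨hmono h (hy m).1, (hy m).2⟩
  have hbd : ∀ n, IsBounded (U n ∩ F) :=
    fun n => isBounded_closedBall.subset (inter_subset_right.trans hF1)
  have hcauchy : CauchySeq y := by
    rw [Metric.cauchySeq_iff]
    intro δ hδ
    obtain ⟨n, hn⟩ := exists_nat_one_div_lt hδ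
    refine ⟨n + 1, fun m hm m' hm' => ?_⟩
    calc dist (y m) (y m') ≤ Metric.diam (U (n + 1) ∩ F) :=
          dist_le_diam_of_mem (hbd (n + 1)) (hyIn hm) (hyIn hm')
      _ < 1 / (n + 1) := hdiam n
      _ < δ := hn
  obtain ⟨x, hx⟩ := cauchySeq_tendsto_of_complete hcauchy
  have hxF : x ∈ F := hFcl.mem_of_tendsto hx (Filter.Eventually.of_forall fun n => (hy n).2)
  have hxU : ∀ n, x ∈ U n := by
    intro n
    apply hcl n
    exact mem_closure_of_tendsto hx
      (Filter.eventually_atTop.2 ⟨n + 1, fun m hm => (hyIn hm).1⟩)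
  refine ⟨x, hxF, fun ε hε => ?_⟩
  obtain ⟨n, hn⟩ := exists_nat_one_div_lt hε
  refine ⟨U (n + 1), (inv (n + 1)).1, hxU (n + 1), fun z hz => ?_⟩
  rw [mem_ball]
  calc dist z x ≤ Metric.diam (U (n + 1) ∩ F) :=
        dist_le_diam_of_mem (hbd (n + 1)) hz ⟨hxU (n + 1), hxF⟩
    _ < 1 / (n + 1) := hdiam n
    _ < ε := hn

/-- `Φ` defined implies PCP. -/
lemma hasPCP_of_phiDefined [CompleteSpace X] (h : PhiDefined X) : HasPCP X := by
  have hfrag : ∀ S : Set X, S ⊆ closedBall (0 : X) 1 → S.Nonempty → ∀ δ : ℝ, 0 < δ →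
      ∃ V : Set X, IsWeaklyOpen V ∧ (V ∩ S).Nonempty ∧ Metric.diam (V ∩ S) < δ := by
    intro S hS hne δ hδ
    obtain ⟨γ, hγ⟩ := h δ hδ
    exact frag_of_empty hγ hS hne
  intro F hFne hFbd hFcl
  obtain ⟨R, hR0, hRF⟩ := hFbd.subset_closedBall_lt 0 (0 : X)
  have hc0 : (0 : ℝ) < R⁻¹ := inv_pos.2 hR0
  set c : ℝ := R⁻¹ with hc
  set F' : Set X := c • F with hF'
  have hF'1 : F' ⊆ closedBall (0 : X) 1 := by
    rintro _ ⟨z, hz, rfl⟩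
    rw [mem_closedBall_zero_iff, norm_smul]
    have hz1 : ‖z‖ ≤ R := mem_closedBall_zero_iff.1 (hRF hz)
    calc ‖c‖ * ‖z‖ ≤ ‖c‖ * R := by
          exact mul_le_mul_of_nonneg_left hz1 (norm_nonneg c)
      _ = 1 := by
          rw [Real.norm_eq_abs, abs_of_pos hc0, hc, inv_mul_cancel₀ hR0.ne']
  have hF'cl : IsClosed F' := by
    rw [hF', ← Set.image_smul]
    exact (Homeomorph.smulOfNeZero c hc0.ne').isClosedMap F hFcl
  have hF'ne : F'.Nonempty := hFne.smul_set
  obtain ⟨x', hx'F', hx'⟩ := pcp_aux hfrag F' hF'1 hF'ne hF'cl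
  obtain ⟨x, hxF, rfl⟩ := hx'F'
  refine ⟨x, hxF, fun ε hε => ?_⟩
  obtain ⟨V', hV'o, hxV', hV'⟩ := hx' (c * ε) (by positivity)
  refine ⟨(fun z : X => c • z) ⁻¹' V', hV'o.preimage_smul c, hxV', ?_⟩
  rintro z ⟨hzV, hzF⟩
  have hmem : c • z ∈ V' ∩ F' := ⟨hzV, smul_mem_smul_set hzF⟩
  have hd := hV' hmem
  rw [mem_ball] at hd ⊢
  rw [dist_smul₀, Real.norm_eq_abs, abs_of_pos hc0] at hd
  exact lt_of_mul_lt_mul_left hd hc0.le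

/-- PCP implies that for every `ε > 0`, some derived iterate of the unit ball indexed below
`ω₁` is empty. -/
lemma forward_empty [TopologicalSpace.SeparableSpace X] (hPCP : HasPCP X) {ε : ℝ} (hε : 0 < ε) :
    ∃ β < (Cardinal.aleph 1).ord, dIter ε (closedBall (0 : X) 1) β = ∅ := by
  haveI : SecondCountableTopology X := UniformSpace.secondCountable_of_separable X
  by_contra hcon
  push_neg at hcon
  set o : Ordinal := (Cardinal.aleph 1).ord with ho
  set B : Set X := closedBall (0 : X) 1 with hB
  set K : Ordinal → Set X := dIter ε B with hK
  have hKcl : ∀ α, IsClosed (K α) := fun α => isClosed_dIter isClosed_closedBall α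
  have hKbd : ∀ α, Bornology.IsBounded (K α) :=
    fun α => isBounded_closedBall.subset (dIter_subset ε B α)
  have hKne : ∀ α, α < o → (K α).Nonempty := hcon
  obtain ⟨b, hbcount, _, hbasis⟩ := TopologicalSpace.exists_countable_basis X
  have hdata : ∀ a : Iio o, ∃ (x : X) (t : Set X), t ∈ b ∧ x ∈ t ∧ x ∈ K a.1 ∧
      ∀ z ∈ K (Order.succ a.1), z ∉ t := by
    rintro ⟨α, hα⟩
    obtain ⟨x, hxK, hcont⟩ := hPCP (K α) (hKne α hα) (hKbd α) (hKcl α)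
    obtain ⟨V, hVopen, hxV, hVsub⟩ := hcont (ε / 3) (by positivity)
    have hVd : Metric.diam (V ∩ K α) < ε := by
      calc Metric.diam (V ∩ K α) ≤ Metric.diam (ball x (ε / 3)) :=
            diam_mono hVsub isBounded_ball
        _ ≤ 2 * (ε / 3) := diam_ball (by positivity)
        _ < ε := by linarith
    obtain ⟨t, htb, hxt, htV⟩ := hbasis.exists_subset_of_mem_open hxV hVopen.isOpen
    refine ⟨x, t, htb, hxt, hxK, fun z hz hzt => ?_⟩
    rw [show K (Order.succ α) = dSet ε (K α) from dIter_succ ε B α] at hz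
    exact hz.2 ⟨V, ⟨hVopen, hVd⟩, htV hzt⟩
  choose xf tf htb hxt hxK hdisj using hdata
  have hinj : Function.Injective tf := by
    have hkey : ∀ a a' : Iio o, a.1 < a'.1 → tf a ≠ tf a' := by
      intro a a' hlt heq
      have hsub : K a'.1 ⊆ K (Order.succ a.1) :=
        dIter_anti ε B a'.1 (Order.succ a.1) (Order.succ_le_of_lt hlt)
      exact hdisj a (xf a') (hsub (hxK a')) (heq ▸ hxt a')
    intro a a' heq
    rcases lt_trichotomy a.1 a'.1 with h | h | h
    · exact absurd heq (hkey a a' h)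
    · exact Subtype.ext h
    · exact absurd heq.symm (hkey a' a h)
  haveI : Countable b := hbcount.to_subtype
  haveI : Countable (Iio o) := by
    have hg : Function.Injective (fun a : Iio o => (⟨tf a, htb a⟩ : b)) := by
      intro a a' h
      exact hinj (congrArg Subtype.val h)
    exact hg.countable
  have hmk : Cardinal.mk (Iio o) ≤ Cardinal.aleph0 := Cardinal.mk_le_aleph0
  rw [Ordinal.mk_Iio_ordinal, ho, Cardinal.card_ord, ← Cardinal.lift_aleph0.{1, 0},
    Cardinal.lift_le] at hmk
  exact (Cardinal.aleph0_lt_aleph_one).not_ge hmk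

end Aux

/-- **Proposition 2.5.** A separable Banach space has the PCP if and only if its
weak-fragmentability index is well defined and `< ω₁`. -/
theorem hasPCP_iff_phi_lt_omega1 (X : Type*) [NormedAddCommGroup X] [NormedSpace ℝ X]
    [CompleteSpace X] [TopologicalSpace.SeparableSpace X] :
    HasPCP X ↔ PhiDefined X ∧ Phi X < (Cardinal.aleph 1).ord := by
  constructor
  · intro hPCP
    have hdef : PhiDefined X := by
      intro ε hε
      obtain ⟨β, _, hβ⟩ := forward_empty hPCP hε
      exact ⟨β, hβ⟩
    refine ⟨hdef, ?_⟩
    have hlt : ∀ ε : ℝ, 0 < ε → PhiEps X ε < (Cardinal.aleph 1).ord := by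
      intro ε hε
      obtain ⟨β, hβo, hβ⟩ := forward_empty hPCP hε
      exact lt_of_le_of_lt (csInf_le (OrderBot.bddBelow _) hβ) hβo
    have hanti : ∀ ε ε' : ℝ, 0 < ε → ε ≤ ε' → PhiEps X ε' ≤ PhiEps X ε := by
      intro ε ε' hε hee
      apply csInf_le_csInf (OrderBot.bddBelow _) (hdef ε hε)
      intro γ hγ
      exact eq_empty_of_subset_empty
        (hγ ▸ dIter_mono hee subset_rfl Metric.isBounded_closedBall γ)
    have hle : Phi X ≤ ⨆ n : ℕ, PhiEps X (1 / (n + 1)) := by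
      apply ciSup_le'
      rintro ⟨ε, hε⟩
      obtain ⟨n, hn⟩ := exists_nat_one_div_lt hε
      calc PhiEps X ε ≤ PhiEps X (1 / (n + 1)) := hanti _ _ (by positivity) hn.le
        _ ≤ ⨆ n : ℕ, PhiEps X (1 / (n + 1)) := Ordinal.le_iSup _ n
    refine lt_of_le_of_lt hle (Ordinal.iSup_lt_ord ?_ fun n => hlt _ (by positivity))
    rw [Cardinal.isRegular_aleph_one.cof_eq]
    simpa using Cardinal.aleph0_lt_aleph_one
  · rintro ⟨hdef, _⟩
    exact hasPCP_of_phiDefined hdef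

end
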